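/- Let k be a positive integer, C ≥ 0 (the optimal coverage), β ≥ 0, and let α_1,...,α_k, ω_1,...,ω_k be nonnegative reals with α_j ≤ k for all j. Suppose that for every i ∈ {1,...,k}, ω_i ≥ α_i·(C - ∑_{j=1}^{i-1} ω_j)/k - β. Then for every i ∈ {1,...,k}, ∑_{j=1}^{i} ω_j ≥ (1 - (1 - ᾱ_i/k)^i)·C - i·β, where ᾱ_i = (1/i)·∑_{j=1}^{i} α_j. -/

import Mathlib

/-- AM-GM style helper: `(m-d)^i * (m+i*d) ≤ m^(i+1)` for suitable nonnegativity. -/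
lemma amgm_aux (i : ℕ) : ∀ m d : ℝ, 0 ≤ m - d → 0 ≤ m + i * d →
    (m - d) ^ i * (m + i * d) ≤ m ^ (i + 1) := by
  induction i with
  | zero => intro m d h1 h2; simpa using h2.le.trans_eq (by ring)
  | succ i ih =>
    intro m d h1 h2
    push_cast at h2 ⊢
    have hi : (0:ℝ) ≤ (i:ℝ) := by positivity
    have hmid : 0 ≤ m + i * d := by nlinarith
    have hm : 0 ≤ m := by nlinarith
    have hp : (0:ℝ) ≤ (m - d) ^ i := pow_nonneg h1 i
    have hstep : (m - d) * (m + (i + 1) * d) ≤ m * (m + i * d) := by nlinarith [sq_nonneg d]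
    have hih := ih m d h1 hmid
    calc (m - d) ^ (i + 1) * (m + ((i:ℝ) + 1) * d)
        = (m - d) ^ i * ((m - d) * (m + ((i:ℝ) + 1) * d)) := by ring
      _ ≤ (m - d) ^ i * (m * (m + i * d)) :=
          mul_le_mul_of_nonneg_left hstep hp
      _ = m * ((m - d) ^ i * (m + i * d)) := by ring
      _ ≤ m * m ^ (i + 1) := mul_le_mul_of_nonneg_left hih hm
      _ = m ^ (i + 1 + 1) := by ring

theorem stmt_2 (k : ℕ) (hk : 0 < k) (C β : ℝ) (hC : 0 ≤ C) (hβ : 0 ≤ β)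
    (α ω : ℕ → ℝ)
    (hα0 : ∀ j ∈ Finset.Icc 1 k, 0 ≤ α j) (hαk : ∀ j ∈ Finset.Icc 1 k, α j ≤ k)
    (hω0 : ∀ j ∈ Finset.Icc 1 k, 0 ≤ ω j)
    (hgreedy : ∀ i ∈ Finset.Icc 1 k,
      ω i ≥ α i * (C - ∑ j ∈ Finset.Icc 1 (i - 1), ω j) / k - β) :
    ∀ i ∈ Finset.Icc 1 k,
      ∑ j ∈ Finset.Icc 1 i, ω j ≥
        (1 - (1 - ((∑ j ∈ Finset.Icc 1 i, α j) / i) / k) ^ i) * C - i * β := by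
  have hk' : (0:ℝ) < k := by exact_mod_cast hk
  intro i hi
  rw [Finset.mem_Icc] at hi
  obtain ⟨hi1, hik⟩ := hi
  induction i, hi1 using Nat.le_induction with
  | base =>
    have hg := hgreedy 1 (Finset.mem_Icc.mpr ⟨le_rfl, hk⟩)
    simp only [Finset.Icc_self, Finset.sum_singleton, Nat.cast_one] at *
    have e1 : α 1 * (C - ∑ j ∈ Finset.Icc 1 (1-1), ω j) / k = α 1 / k * C := by
      norm_num
      ring
    have e2 : (1 - (1 - α 1 / 1 / (k:ℝ)) ^ 1) * C - 1 * β = α 1 / k * C - β := by ring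
    rw [e2]; rw [e1] at hg; linarith
  | succ i hi1 ih =>
    have hik' : i ≤ k := le_trans (Nat.le_succ i) hik
    have ihS := ih hik'
    set S := ∑ j ∈ Finset.Icc 1 i, ω j with hS
    set T := ∑ j ∈ Finset.Icc 1 i, α j with hT
    set a := α (i+1) with ha
    have hmem : i + 1 ∈ Finset.Icc 1 k := Finset.mem_Icc.mpr ⟨Nat.le_add_left 1 i, hik⟩
    have hsumω : ∑ j ∈ Finset.Icc 1 (i+1), ω j = S + ω (i+1) := by
      rw [Finset.sum_Icc_succ_top (Nat.le_add_left 1 i)]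
    have hsumα : ∑ j ∈ Finset.Icc 1 (i+1), α j = T + a := by
      rw [Finset.sum_Icc_succ_top (Nat.le_add_left 1 i)]
    have hg := hgreedy (i+1) hmem
    simp only [Nat.add_sub_cancel] at hg
    rw [← hS, ← ha] at hg
    have hi' : (0:ℝ) < (i:ℝ) := by exact_mod_cast hi1
    -- bounds on T and a
    have hTle : T ≤ i * k := by
      rw [hT]
      calc ∑ j ∈ Finset.Icc 1 i, α j ≤ ∑ j ∈ Finset.Icc 1 i, (k:ℝ) :=
            Finset.sum_le_sum (fun j hj => hαk j (Finset.mem_Icc.mpr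
              ⟨(Finset.mem_Icc.mp hj).1, le_trans (Finset.mem_Icc.mp hj).2 hik'⟩))
        _ = i * k := by rw [Finset.sum_const, Nat.card_Icc]; push_cast; ring
    have ha0 : 0 ≤ a := hα0 (i+1) hmem
    have hak : a ≤ k := hαk (i+1) hmem
    -- key AM-GM inequality
    set m : ℝ := 1 - (T + a) / ((i+1) * k) with hm
    set d : ℝ := m - (1 - T / (i * k)) with hd
    have hmd : m - d = 1 - T / (i * k) := by rw [hd]; ring
    have hmid : m + i * d = 1 - a / k := by
      rw [hd, hm]; field_simp; ring
    have key : (1 - T / (i * k)) ^ i * (1 - a / k) ≤ m ^ (i + 1) := by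
      rw [← hmd, ← hmid]
      apply amgm_aux
      · rw [hmd]
        have : T / (i * k) ≤ 1 := by
          rw [div_le_one (by positivity)]; exact hTle
        linarith
      · rw [hmid]
        have : a / k ≤ 1 := by rw [div_le_one hk']; exact hak
        linarith
    -- arithmetic conclusion
    set y : ℝ := 1 - a / k with hy
    have hy0 : 0 ≤ y := by
      rw [hy]; have : a / k ≤ 1 := by rw [div_le_one hk']; exact hak
      linarith
    have hy1 : y ≤ 1 := by
      rw [hy]; have : 0 ≤ a / k := by positivity
      linarith
    have hg' : ω (i+1) ≥ (1 - y) * (C - S) - β := by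
      have e : (1 - y) * (C - S) = a * (C - S) / k := by
        rw [hy]; field_simp; ring
      rw [e]; exact hg
    set x : ℝ := 1 - T / (i * k) with hx
    have ihS' : S ≥ (1 - x ^ i) * C - i * β := by
      have e : T / (i:ℝ) / k = T / (i * k) := by rw [div_div]
      rw [hx, ← e]
      exact ihS
    have hky : x ^ i * y ≤ m ^ (i+1) := key
    have hmul1 : y * ((1 - x ^ i) * C - i * β) ≤ y * S :=
      mul_le_mul_of_nonneg_left ihS' hy0
    have hmul2 : C * (x ^ i * y) ≤ C * m ^ (i+1) :=
      mul_le_mul_of_nonneg_left hky hC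
    have hmul3 : 0 ≤ (i:ℝ) * β * (1 - y) :=
      mul_nonneg (mul_nonneg hi'.le hβ) (by linarith)
    rw [hsumω]
    have egoal : (1 - (1 - (∑ j ∈ Finset.Icc 1 (i+1), α j) / (↑(i+1)) / k) ^ (i+1)) * C
        - (↑(i+1)) * β = (1 - m ^ (i+1)) * C - ((i:ℝ) + 1) * β := by
      rw [hsumα, hm]
      push_cast
      rw [div_div]
    rw [egoal]
    nlinarith [hmul1, hmul2, hmul3, hg', hβ]
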